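/- Let d ≥ 1 and let W0 and Ŵ be real (d+2)×(d+2) matrices. Let q1 ≠ q2 be indices in {0,…,d+1} and suppose q1 is not an ancestor of q2 in the directed graph associated with W0. Then (Ŵ*)_{q2,q1} ≤ max_{i,j} |Ŵ_{i,j} − (W0)_{i,j}|, where Ŵ* = |Ŵ|^{(1)} ⊕ |Ŵ|^{(2)} ⊕ ⋯ ⊕ |Ŵ|^{(d)} and the maximum on the right is over all entries. -/

import Mathlib

/-- Edge relation of the directed graph associated with a square real matrix `W`:
there is an edge `i → j` iff `W j i ≠ 0`. -/
def edgeRel {n : ℕ} (W : Matrix (Fin n) (Fin n) ℝ) : Fin n → Fin n → Prop :=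
  fun i j => W j i ≠ 0

/-- `f : Fin (k+1) → V` is a `k`-step directed path from `i` to `j` for the relation `R`:
a sequence of pairwise distinct vertices joined by edges. -/
def IsPathFn {V : Type*} (R : V → V → Prop) {k : ℕ} (f : Fin (k + 1) → V) (i j : V) : Prop :=
  Function.Injective f ∧ f 0 = i ∧ f (Fin.last k) = j ∧
    ∀ t : Fin k, R (f t.castSucc) (f t.succ)

/-- There is a `k`-step directed path from `i` to `j`. -/
def IsPathLen {V : Type*} (R : V → V → Prop) (k : ℕ) (i j : V) : Prop :=
  ∃ f : Fin (k + 1) → V, IsPathFn R f i j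

/-- `i` is an ancestor of `j`: there is a `k`-step directed path from `i` to `j`
for some `k ≥ 1`. -/
def IsAncestor {V : Type*} (R : V → V → Prop) (i j : V) : Prop :=
  ∃ k : ℕ, 1 ≤ k ∧ IsPathLen R k i j

/-- The directed graph with edge relation `R` is acyclic: no vertex is an ancestor
of itself. -/
def IsAcyclicRel {V : Type*} (R : V → V → Prop) : Prop :=
  ∀ v : V, ¬ IsAncestor R v v

/-- Max–min (Boolean-logic) matrix product: the `(i,j)` entry of `mmMul A B` is
`max_k min (A i k) (B k j)`. -/
noncomputable def mmMul {p q r : ℕ} (A : Matrix (Fin p) (Fin q) ℝ)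
    (B : Matrix (Fin q) (Fin r) ℝ) : Matrix (Fin p) (Fin r) ℝ :=
  Matrix.of fun i j => ⨆ k : Fin q, min (A i k) (B k j)

/-- Max–min matrix power: `A^{(1)} = A` and `A^{(k)} = A^{(k-1)} ⊗ A` for `k ≥ 2`.
(The value at `0` is junk.) -/
noncomputable def mmPow {n : ℕ} (A : Matrix (Fin n) (Fin n) ℝ) :
    ℕ → Matrix (Fin n) (Fin n) ℝ
  | 0 => A
  | 1 => A
  | (k + 2) => mmMul (mmPow A (k + 1)) A

/-- Entrywise maximum `A ⊕ B` of two matrices of the same size. -/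
def mSup {m n : ℕ} (A B : Matrix (Fin m) (Fin n) ℝ) : Matrix (Fin m) (Fin n) ℝ :=
  Matrix.of fun i j => max (A i j) (B i j)

/-- The aggregate `A^{(1)} ⊕ A^{(2)} ⊕ ⋯ ⊕ A^{(d)}` of the max–min powers of `A`. -/
noncomputable def mStar {n : ℕ} (d : ℕ) (A : Matrix (Fin n) (Fin n) ℝ) :
    Matrix (Fin n) (Fin n) ℝ :=
  Matrix.of fun i j => ⨆ k : Fin d, mmPow A (k.val + 1) i j

/-- Entrywise absolute value of a matrix. -/
def mAbs {m n : ℕ} (A : Matrix (Fin m) (Fin n) ℝ) : Matrix (Fin m) (Fin n) ℝ :=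
  Matrix.of fun i j => |A i j|


/-- Splicing out the segment between two occurrences of `x` preserves `Chain'`. -/
lemma chain'_splice {V : Type*} {R : V → V → Prop} (l₁ l₂ l₃ : List V) (x : V)
    (h : List.Chain' R (l₁ ++ x :: (l₂ ++ x :: l₃))) :
    List.Chain' R (l₁ ++ x :: l₃) := by
  unfold List.Chain' at h ⊢
  rw [List.isChain_append] at h ⊢
  obtain ⟨h1, h2, h3⟩ := h
  refine ⟨h1, ?_, ?_⟩
  · have e : (x :: (l₂ ++ x :: l₃)) = (x :: l₂) ++ (x :: l₃) := by simp
    rw [e, List.isChain_append] at h2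
    exact h2.2.1
  · simpa using h3

/-- A walk (given as a list that is a chain for `R`) from `a` to `b` with `a ≠ b`
yields an injective path, i.e. `a` is an ancestor of `b`. -/
lemma list_walk_ancestor {V : Type*} (R : V → V → Prop) :
    ∀ n (l : List V) (a b : V), l.length ≤ n → l.Chain' R → l.head? = some a →
      l.getLast? = some b → a ≠ b → IsAncestor R a b := by
  intro n
  induction n with
  | zero =>
    intro l a b hlen _ hh _ _
    have : l = [] := List.eq_nil_of_length_eq_zero (Nat.le_zero.mp hlen)
    simp [this] at hh
  | succ n ih =>
    intro l a b hlen hch hh hg hab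
    by_cases hnd : l.Nodup
    · -- construct the path
      have hne : l ≠ [] := by rintro rfl; simp at hh
      have hlen1 : 1 ≤ l.length := List.length_pos_iff.mpr hne
      have hha : l.head hne = a := by rw [List.head?_eq_head hne] at hh; exact Option.some.inj hh
      have hgb : l.getLast hne = b := by
        rw [List.getLast?_eq_getLast hne] at hg; exact Option.some.inj hg
      have hlen2 : 2 ≤ l.length := by
        rcases Nat.lt_or_ge l.length 2 with h2 | h2
        · exfalso
          have : l.length = 1 := by omega
          obtain ⟨c, rfl⟩ := List.length_eq_one_iff.mp this
          exact hab (by simp [← hha, ← hgb])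
        · exact h2
      set m := l.length - 1 with hm
      have hcast : m + 1 = l.length := by omega
      refine ⟨m, by omega, fun i => l.get (Fin.cast hcast i), ?_, ?_, ?_, ?_⟩
      · intro i j hij
        have := List.nodup_iff_injective_get.mp hnd hij
        exact Fin.cast_injective _ (by exact this)
      · rw [← hha]
        simp only [List.get_eq_getElem]
        exact List.getElem_zero (by omega)
      · rw [← hgb, List.getLast_eq_getElem]
        simp [List.get_eq_getElem, Fin.last, hm]
      · intro t
        have := List.isChain_iff_getElem.mp hch t.val (by have := t.isLt; omega)
        convert this using 2 <;> rfl
    · -- splice out a duplicate and recurse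
      obtain ⟨x, hx⟩ := List.exists_duplicate_iff_not_nodup.mpr hnd
      rw [List.duplicate_iff_sublist] at hx
      rw [List.cons_sublist_iff] at hx
      obtain ⟨r₁, r₂, rfl, hx1, hx2⟩ := hx
      rw [List.singleton_sublist] at hx2
      obtain ⟨s, t, rfl⟩ := List.append_of_mem hx1
      obtain ⟨u, v, rfl⟩ := List.append_of_mem hx2
      have hshape : (s ++ x :: t) ++ (u ++ x :: v) = s ++ x :: ((t ++ u) ++ x :: v) := by
        simp
      rw [hshape] at hch hlen hh hg
      have hch' : List.Chain' R (s ++ x :: v) := chain'_splice s (t ++ u) v x hch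
      have hlen' : (s ++ x :: v).length ≤ n := by
        simp only [List.length_append, List.length_cons] at hlen ⊢; omega
      have hh' : (s ++ x :: v).head? = some a := by
        cases s with
        | nil => simpa using hh
        | cons c s' => simpa using hh
      have hg' : (s ++ x :: v).getLast? = some b := by
        have e1 : s ++ x :: ((t ++ u) ++ x :: v) = (s ++ x :: (t ++ u)) ++ (x :: v) := by simp
        rw [e1, List.getLast?_append_of_ne_nil _ (by simp)] at hg
        rw [show s ++ x :: v = s ++ (x :: v) by simp,
          List.getLast?_append_of_ne_nil _ (by simp)]
        exact hg
      exact ih _ a b hlen' hch' hh' hg' hab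

/-- A walk given as a function on `Fin (k+1)` yields ancestry. -/
lemma walk_to_ancestor {V : Type*} (R : V → V → Prop) {k : ℕ} (f : Fin (k + 1) → V) (a b : V)
    (h0 : f 0 = a) (hl : f (Fin.last k) = b)
    (he : ∀ t : Fin k, R (f t.castSucc) (f t.succ)) (hab : a ≠ b) : IsAncestor R a b := by
  apply list_walk_ancestor R (k + 1) (List.ofFn f) a b (by simp)
  · unfold List.Chain'
    rw [List.isChain_iff_getElem]
    intro i hilt
    simp only [List.length_ofFn] at hilt
    rw [List.getElem_ofFn, List.getElem_ofFn]
    have hik : i < k := by omega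
    have := he ⟨i, hik⟩
    convert this using 2 <;> rfl
  · have hne : List.ofFn f ≠ [] := by simp [← List.length_pos_iff]
    rw [List.head?_eq_head hne]
    simp only [Option.some.injEq]
    rw [← List.getElem_zero (by simp), List.getElem_ofFn]
    rw [← h0]; congr 1
  · have hne : List.ofFn f ≠ [] := by simp [← List.length_pos_iff]
    rw [List.getLast?_eq_getLast hne, List.getLast_eq_getElem, List.getElem_ofFn]
    simp only [Option.some.injEq]
    rw [← hl]; congr 1
    ext
    simp [Fin.last, List.length_ofFn]
  · exact hab

/-- The `(i,j)` entry of the `(m+1)`-st max–min power is bounded by the entries of `A`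
along some vertex sequence from `i` to `j`. -/
lemma mmPow_le_seq {n : ℕ} (A : Matrix (Fin (n + 1)) (Fin (n + 1)) ℝ) (i : Fin (n + 1)) :
    ∀ (m : ℕ) (j : Fin (n + 1)), ∃ s : Fin (m + 2) → Fin (n + 1),
      s 0 = i ∧ s (Fin.last (m + 1)) = j ∧
      ∀ t : Fin (m + 1), mmPow A (m + 1) i j ≤ A (s t.castSucc) (s t.succ) := by
  intro m
  induction m with
  | zero =>
    intro j
    refine ⟨fun u => if u.val = 0 then i else j, by simp, by simp [Fin.last], ?_⟩
    intro t
    have ht : t = 0 := Fin.fin_one_eq_zero t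
    subst ht
    simp only [Fin.castSucc_zero, Fin.succ_zero_eq_one]
    norm_num
    exact le_of_eq rfl
  | succ m ih =>
    intro j
    obtain ⟨k0, hk0⟩ := Finite.exists_max (fun k : Fin (n + 1) =>
      min (mmPow A (m + 1) i k) (A k j))
    have hsup : mmPow A (m + 2) i j ≤ min (mmPow A (m + 1) i k0) (A k0 j) := by
      have : mmPow A (m + 2) i j = ⨆ k : Fin (n + 1), min (mmPow A (m + 1) i k) (A k j) := rfl
      rw [this]
      exact ciSup_le hk0
    obtain ⟨s, hs0, hsl, hse⟩ := ih k0
    refine ⟨Fin.snoc s j, ?_, Fin.snoc_last _ _, ?_⟩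
    · rw [show (0 : Fin (m + 3)) = Fin.castSucc 0 by simp, Fin.snoc_castSucc]
      exact hs0
    · intro t
      refine Fin.lastCases ?_ ?_ t
      · rw [Fin.succ_last, Fin.snoc_last, Fin.snoc_castSucc, hsl]
        exact le_trans hsup (min_le_right _ _)
      · intro u
        rw [Fin.succ_castSucc, Fin.snoc_castSucc, Fin.snoc_castSucc]
        exact le_trans (le_trans hsup (min_le_left _ _)) (hse u)

/-- If `q1` is not an ancestor of `q2` in the graph associated with
`W0`, then the `(q2,q1)` entry of `Ŵ* = |Ŵ|^{(1)} ⊕ ⋯ ⊕ |Ŵ|^{(d)}` is bounded by the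
maximal entrywise deviation `max_{i,j} |Ŵ_{i,j} - (W0)_{i,j}|`. -/
theorem stmt_9 (d : ℕ) (hd : 1 ≤ d) (W0 What : Matrix (Fin (d + 2)) (Fin (d + 2)) ℝ)
    (q1 q2 : Fin (d + 2)) (hne : q1 ≠ q2)
    (hnull : ¬ IsAncestor (edgeRel W0) q1 q2) :
    mStar d (mAbs What) q2 q1 ≤
      ⨆ p : Fin (d + 2) × Fin (d + 2), |What p.1 p.2 - W0 p.1 p.2| := by
  set ε := ⨆ p : Fin (d + 2) × Fin (d + 2), |What p.1 p.2 - W0 p.1 p.2| with hεdef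
  have hbdd : BddAbove (Set.range fun p : Fin (d + 2) × Fin (d + 2) =>
      |What p.1 p.2 - W0 p.1 p.2|) := Set.Finite.bddAbove (Set.finite_range _)
  have hεle : ∀ i j : Fin (d + 2), |What i j - W0 i j| ≤ ε := fun i j =>
    le_ciSup hbdd (⟨i, j⟩ : Fin (d + 2) × Fin (d + 2))
  have hnonempty : Nonempty (Fin d) := ⟨⟨0, hd⟩⟩
  show (⨆ k : Fin d, mmPow (mAbs What) (k.val + 1) q2 q1) ≤ ε
  apply ciSup_le
  intro k
  by_contra hcon
  push_neg at hcon
  obtain ⟨s, hs0, hsl, hse⟩ := mmPow_le_seq (n := d + 1) (mAbs What) q2 k.val q1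
  have hedge : ∀ t : Fin (k.val + 1), edgeRel W0 (s t.succ) (s t.castSucc) := by
    intro t
    intro h0
    have h1 := hse t
    have h2 : mAbs What (s t.castSucc) (s t.succ) = |What (s t.castSucc) (s t.succ)| := rfl
    have h3 := hεle (s t.castSucc) (s t.succ)
    rw [h0, sub_zero] at h3
    rw [h2] at h1
    linarith
  apply hnull
  apply walk_to_ancestor (edgeRel W0) (fun u : Fin (k.val + 2) => s u.rev) q1 q2
  · simp only [Fin.rev_zero, hsl]
  · simp only [Fin.rev_last, hs0]
  · intro t
    simp only [Fin.rev_castSucc, Fin.rev_succ]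
    exact hedge t.rev
  · exact hne
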